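/- If w is an aperiodic infinite word, then limsup_{n→∞} inrc_w(n)/n ≥ 1/(1+φ²) > 0; in particular inrc_w(n) grows at least linearly along a subsequence. -/

import Mathlib

open Filter
open scoped ENNReal

/-- The set of `m` such that the first `m` length-`n` factors of `x`
are pairwise distinct. -/
def inrcSet {α : Type*} (x : ℕ → α) (n : ℕ) : Set ℕ :=
  {m | ∀ i < m, ∀ j < m, (∀ d < n, x (i + d) = x (j + d)) → i = j}

/-- The initial non-repetitive complexity. -/
noncomputable def inrc {α : Type*} (x : ℕ → α) (n : ℕ) : ℕ := sSup (inrcSet x n)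

/-- `x` has period `p` on the interval `[a, c)`. -/
def PerI {α : Type*} (x : ℕ → α) (a c p : ℕ) : Prop :=
  ∀ t, a ≤ t → t + p < c → x (t + p) = x t

theorem perI_mono {α : Type*} {x : ℕ → α} {a c a' c' p : ℕ} (H : PerI x a c p)
    (ha : a ≤ a') (hc : c' ≤ c) : PerI x a' c' p :=
  fun t ht htc => H t (ha.trans ht) (lt_of_lt_of_le htc hc)

theorem perI_mul {α : Type*} {x : ℕ → α} {a c p : ℕ} (H : PerI x a c p) :
    ∀ k s, a ≤ s → s + p * k < c → x (s + p * k) = x s := by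
  intro k
  induction k with
  | zero => intro s _ _; simp
  | succ k ih =>
    intro s hs hlt
    have hmul : p * (k + 1) = p * k + p := by ring
    have h1 : x (s + p * k + p) = x (s + p * k) := by
      apply H (s + p * k) (le_trans hs (Nat.le_add_right _ _))
      omega
    have h2 : x (s + p * k) = x s := ih s hs (by omega)
    calc x (s + p * (k + 1)) = x (s + p * k + p) := by rw [hmul, ← Nat.add_assoc]
      _ = x (s + p * k) := h1
      _ = x s := h2

theorem exists_mult {p : ℕ} (hp : 0 < p) (m : ℕ) : ∃ k, m ≤ p * k ∧ p * k < m + p := by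
  induction m with
  | zero => exact ⟨0, by omega, by omega⟩
  | succ m ih =>
    obtain ⟨k, h1, h2⟩ := ih
    rcases Nat.lt_or_ge (p * k) (m + 1) with hc | hc
    · exact ⟨k + 1, by rw [Nat.mul_succ]; omega, by rw [Nat.mul_succ]; omega⟩
    · exact ⟨k, hc, by omega⟩

/-- Extension lemma: if `x` has period `p` on `[a,c)` and period `g` on a
subinterval `[b,e)` of length at least `p + g`, then `x` has period `g` on
all of `[a,c)`. -/
theorem perI_ext {α : Type*} {x : ℕ → α} {a c b e p g : ℕ} (hp : 0 < p)
    (H1 : PerI x a c p) (H2 : PerI x b e g) (hab : a ≤ b) (hec : e ≤ c)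
    (hlen : b + p + g ≤ e) : PerI x a c g := by
  intro t hat htc
  by_cases htb : t < b
  · obtain ⟨k, hk1, hk2⟩ := exists_mult hp (b - t)
    set m := p * k with hm
    have hb1 : b ≤ t + m := by omega
    have hb2 : t + m < b + p := by omega
    have e1 : x (t + m) = x t := perI_mul H1 k t hat (by omega)
    have e2 : x (t + g + m) = x (t + g) :=
      perI_mul H1 k (t + g) (le_trans hat (Nat.le_add_right _ _)) (by omega)
    have e3 : x (t + m + g) = x (t + m) := H2 (t + m) hb1 (by omega)
    calc x (t + g) = x (t + g + m) := e2.symm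
      _ = x (t + m + g) := by congr 1; omega
      _ = x (t + m) := e3
      _ = x t := e1
  · push_neg at htb
    set q := (t - b) / p with hq
    set rem := (t - b) % p with hrem
    have h1 : rem + p * q = t - b := Nat.mod_add_div (t - b) p
    have h2 : rem < p := Nat.mod_lt _ hp
    set s := b + rem with hs
    set m := p * q with hm
    have hts : s + m = t := by omega
    have e1 : x (s + m) = x s := perI_mul H1 q s (by omega) (by omega)
    have e2 : x (s + g + m) = x (s + g) :=
      perI_mul H1 q (s + g) (by omega) (by omega)
    have e3 : x (s + g) = x s := H2 s (by omega) (by omega)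
    have hteq : t + g = s + g + m := by omega
    calc x (t + g) = x (s + g + m) := by rw [hteq]
      _ = x (s + g) := e2
      _ = x s := e3
      _ = x (s + m) := e1.symm
      _ = x t := by rw [hts]

/-- Gluing lemma: two overlapping intervals with the same period. -/
theorem perI_glue {α : Type*} {x : ℕ → α} {a c a' c' g : ℕ}
    (H1 : PerI x a c g) (H2 : PerI x a' c' g)
    (hov : max a a' + g ≤ min c c') : PerI x (min a a') (max c c') g := by
  intro t ht htc
  by_cases h1 : t < a'
  · exact H1 t (by omega) (by omega)
  · push_neg at h1
    by_cases h2 : t + g < c'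
    · exact H2 t h1 h2
    · push_neg at h2
      exact H1 t (by omega) (by omega)

theorem inrcSet_bdd {α : Type*} [Fintype α] (x : ℕ → α) (n : ℕ) :
    BddAbove (inrcSet x n) := by
  classical
  refine ⟨Fintype.card α ^ n, fun m hm => ?_⟩
  have hinj : Function.Injective (fun i : Fin m => (fun d : Fin n => x (i + d))) := by
    intro i j hij
    have heq : ∀ d < n, x (i + d) = x (j + d) := by
      intro d hd
      exact congrFun hij ⟨d, hd⟩
    exact Fin.ext (hm i.val i.isLt j.val j.isLt heq)
  have := Fintype.card_le_of_injective _ hinj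
  simpa [Fintype.card_fun] using this

theorem inrc_limsup_of_aperiodic {α : Type*} [Fintype α] (x : ℕ → α)
    (h : ¬ ∃ p > 0, ∃ N, ∀ i ≥ N, x (i + p) = x i) :
    ENNReal.ofReal (1 / (1 + ((1 + Real.sqrt 5) / 2) ^ 2))
      ≤ limsup (fun n => (inrc x n : ℝ≥0∞) / (n : ℝ≥0∞)) atTop ∧
    (0 : ℝ) < 1 / (1 + ((1 + Real.sqrt 5) / 2) ^ 2) := by
  set r : ℝ := 1 / (1 + ((1 + Real.sqrt 5) / 2) ^ 2) with hr
  have hsqrt5 : (0:ℝ) ≤ Real.sqrt 5 := Real.sqrt_nonneg 5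
  have hr0 : 0 < r := by positivity
  have h5 : (11/5 : ℝ) ≤ Real.sqrt 5 := by
    rw [Real.le_sqrt (by norm_num) (by norm_num)]
    norm_num
  have hr3 : r ≤ 3/10 := by
    rw [hr, div_le_div_iff₀ (by positivity) (by norm_num)]
    nlinarith [h5, hsqrt5]
  refine ⟨?_, hr0⟩
  by_contra hlt
  rw [not_le] at hlt
  have hev : ∀ᶠ n in atTop, (inrc x n : ℝ≥0∞) / (n : ℝ≥0∞) < ENNReal.ofReal r :=
    eventually_lt_of_limsup_lt hlt
  obtain ⟨N, hN⟩ := eventually_atTop.mp hev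
  set N₁ := max N 3 with hN₁
  -- key extraction: for every n ≥ N₁, there is a periodic window
  have key : ∀ n, N₁ ≤ n → ∃ i p : ℕ, 0 < p ∧ ((i : ℝ) + (p : ℝ) < r * n) ∧ PerI x i (i + n + p) p := by
    intro n hn
    have hn3 : 3 ≤ n := le_trans (le_max_right N 3) hn
    have h1 : (inrc x n : ℝ≥0∞) / (n : ℝ≥0∞) < ENNReal.ofReal r :=
      hN n (le_trans (le_max_left N 3) hn)
    have hn0 : (n : ℝ≥0∞) ≠ 0 := by
      simp only [ne_eq, Nat.cast_eq_zero]; omega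
    have hntop : (n : ℝ≥0∞) ≠ ∞ := ENNReal.natCast_ne_top n
    have h2 : (inrc x n : ℝ≥0∞) < ENNReal.ofReal r * (n : ℝ≥0∞) :=
      (ENNReal.div_lt_iff (Or.inl hn0) (Or.inl hntop)).mp h1
    have h3 : (inrc x n : ℝ) < r * n := by
      have hcast : ENNReal.ofReal r * (n : ℝ≥0∞) = ENNReal.ofReal (r * n) := by
        rw [ENNReal.ofReal_mul hr0.le, ENNReal.ofReal_natCast]
      rw [hcast, ← ENNReal.ofReal_natCast (inrc x n),
        ENNReal.ofReal_lt_ofReal_iff_of_nonneg (Nat.cast_nonneg _)] at h2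
      exact h2
    set M := inrc x n with hM
    have hnot : M + 1 ∉ inrcSet x n := by
      intro hmem
      have := le_csSup (inrcSet_bdd x n) hmem
      simp only [hM, inrc] at this ⊢
      omega
    simp only [inrcSet, Set.mem_setOf_eq] at hnot
    push_neg at hnot
    obtain ⟨i, hi, j, hj, hfac, hij⟩ := hnot
    -- WLOG i < j
    rcases Ne.lt_or_gt hij with hlt' | hlt'
    · refine ⟨i, j - i, by omega, ?_, ?_⟩
      · have hji : ((j - i : ℕ) : ℝ) = (j : ℝ) - i := by
          push_cast [Nat.cast_sub hlt'.le]; ring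
        have hjM : (j : ℝ) ≤ M := by exact_mod_cast Nat.lt_succ_iff.mp hj
        rw [hji]; linarith
      · intro t hti htc
        have hd : t - i < n := by omega
        calc x (t + (j - i)) = x (j + (t - i)) := by congr 1; omega
          _ = x (i + (t - i)) := (hfac (t - i) hd).symm
          _ = x t := by congr 1; omega
    · refine ⟨j, i - j, by omega, ?_, ?_⟩
      · have hji : ((i - j : ℕ) : ℝ) = (i : ℝ) - j := by
          push_cast [Nat.cast_sub hlt'.le]; ring
        have hiM : (i : ℝ) ≤ M := by exact_mod_cast Nat.lt_succ_iff.mp hi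
        rw [hji]; linarith
      · intro t htj htc
        have hd : t - j < n := by omega
        calc x (t + (i - j)) = x (i + (t - j)) := by congr 1; omega
          _ = x (j + (t - j)) := hfac (t - j) hd
          _ = x t := by congr 1; omega
  -- start the chain
  obtain ⟨i₀, p₀, hp₀, hb₀, hP₀⟩ := key N₁ le_rfl
  set n₀ := N₁ with hn₀
  have hn₀3 : 3 ≤ n₀ := le_max_right N 3
  have chain : ∀ k, ∃ a c, a ≤ i₀ ∧ n₀ + k ≤ c ∧ PerI x a c p₀ := by
    intro k
    induction k with
    | zero => exact ⟨i₀, i₀ + n₀ + p₀, le_rfl, by omega, hP₀⟩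
    | succ k ih =>
      obtain ⟨a, c, ha, hc, hPer⟩ := ih
      obtain ⟨i, p, hp, hb, hPn⟩ := key (n₀ + k + 1) (by omega)
      set n := n₀ + k + 1 with hn
      -- numeric overlap bound
      have hcast : ((max a i + p + p₀ : ℕ) : ℝ) < ((n₀ + k : ℕ) : ℝ) := by
        have hmax : ((max a i : ℕ) : ℝ) ≤ (a : ℝ) + i := by
          rw [Nat.cast_max]
          exact max_le (le_add_of_nonneg_right (Nat.cast_nonneg _))
            (le_add_of_nonneg_left (Nat.cast_nonneg _))
        have haR : (a : ℝ) ≤ i₀ := by exact_mod_cast ha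
        have hnR : (3 : ℝ) ≤ (n₀ : ℝ) := by exact_mod_cast hn₀3
        have hkR : (0 : ℝ) ≤ (k : ℝ) := Nat.cast_nonneg _
        have hbn : (i : ℝ) + p < r * ((n₀ : ℝ) + k + 1) := by
          have := hb; rw [hn] at this; push_cast at this ⊢; linarith
        have hb₀' : (i₀ : ℝ) + p₀ < r * n₀ := by
          have := hb₀; push_cast at this ⊢; linarith
        have hnum : r * ((n₀ : ℝ) + k + 1) + r * n₀ ≤ (n₀ : ℝ) + k := by
          nlinarith [mul_le_mul_of_nonneg_right hr3 (by linarith : (0:ℝ) ≤ (n₀ : ℝ) + k + 1),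
            mul_le_mul_of_nonneg_right hr3 (by linarith : (0:ℝ) ≤ (n₀ : ℝ))]
        push_cast
        push_cast at hmax
        linarith
      have hovN : max a i + p + p₀ ≤ n₀ + k := by exact_mod_cast hcast.le
      have hov : max a i + p + p₀ ≤ min c (i + n + p) := by omega
      have hsub : PerI x (max a i) (min c (i + n + p)) p₀ :=
        perI_mono hPer (le_max_left _ _) (min_le_left _ _)
      have hext : PerI x i (i + n + p) p₀ :=
        perI_ext hp hPn hsub (le_max_right _ _) (min_le_right _ _) (by omega)
      have hglue : PerI x (min a i) (max c (i + n + p)) p₀ :=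
        perI_glue hPer hext (by omega)
      exact ⟨min a i, max c (i + n + p), by omega, by omega, hglue⟩
  -- derive ultimate periodicity, contradiction
  apply h
  refine ⟨p₀, hp₀, i₀, fun t ht => ?_⟩
  obtain ⟨a, c, ha, hc, hPer⟩ := chain (t + p₀ + 1)
  exact hPer t (le_trans ha ht) (by omega)
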